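/- Let n ≥ 1, let Ω ⊆ ℂⁿ be a bounded nonempty open set, and let φ : ℂⁿ → ℂⁿ be continuously real-differentiable (C¹) on an open neighborhood of closure(Ω), with φ(Ω) ⊆ Ω and φ(closure(Ω)) ⊆ closure(Ω). Set K := φ(∂Ω) ∩ ∂Ω and F := φ⁻¹(K) ∩ closure(Ω), where ∂Ω denotes the topological frontier of Ω. Assume there is an open set U with F ⊆ U such that for every z ∈ U ∩ closure(Ω) the real Fréchet derivative Dφ(z) is complex-linear (i.e. ∂̄φ = 0 on U ∩ closure(Ω)). Then there exists C > 0 such that for every f in the Bergman class A²(Ω), ∫_Ω ‖∂̄(f∘φ)(z)‖² dV(z) ≤ C ∫_Ω |f|² dV. -/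

import Mathlib

open MeasureTheory ENNReal

/-- Lebesgue measure on `ℂⁿ` (the product of the Lebesgue measures on the factors). -/
noncomputable instance EuclideanSpace.measureSpaceComplex {n : ℕ} :
    MeasureSpace (EuclideanSpace ℂ (Fin n)) :=
  ⟨Measure.map (WithLp.toLp 2) (volume : Measure (Fin n → ℂ))⟩

instance {n : ℕ} : BorelSpace (EuclideanSpace ℂ (Fin n)) :=
  inferInstance

/-- `f` belongs to the Bergman class `A²(Ω)`: holomorphic on `Ω` and square-integrable on `Ω`. -/
def BergmanA2 {n : ℕ} (Ω : Set (EuclideanSpace ℂ (Fin n)))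
    (f : EuclideanSpace ℂ (Fin n) → ℂ) : Prop :=
  (∀ z ∈ Ω, DifferentiableAt ℂ f z) ∧
    (∫⁻ z in Ω, (‖f z‖₊ : ℝ≥0∞) ^ 2) < ⊤

/-- The `∂̄`-part (conjugate-linear part) of the real Fréchet derivative of `u` at `z`:
`v ↦ (1/2)(Du(z)(v) + i·Du(z)(i·v))`. -/
noncomputable def dbar {n : ℕ} (u : EuclideanSpace ℂ (Fin n) → ℂ)
    (z : EuclideanSpace ℂ (Fin n)) : EuclideanSpace ℂ (Fin n) →L[ℝ] ℂ :=
  (2⁻¹ : ℂ) • (fderiv ℝ u z +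
    Complex.I • ((fderiv ℝ u z).comp
      (Complex.I • ContinuousLinearMap.id ℝ (EuclideanSpace ℂ (Fin n)))))

open Metric Real Set

lemma circle_mean_eq {f : ℂ → ℂ} {c : ℂ} {s : ℝ} (hs : 0 < s)
    (hd : DifferentiableOn ℂ f (closedBall c s)) :
    (∫ θ in (0:ℝ)..(2*π), f (circleMap c s θ)) = (2*π : ℝ) • f c := by
  have h := hd.circleIntegral_sub_inv_smul (Metric.mem_ball_self hs)
  rw [circleIntegral] at h
  have hne : ∀ θ : ℝ, circleMap 0 s θ ≠ 0 := by
    intro θ h0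
    have h1 := norm_circleMap_zero s θ
    rw [h0] at h1
    simp only [norm_zero] at h1
    rw [abs_of_pos hs] at h1
    linarith
  have heq : ∀ θ ∈ Set.uIcc (0:ℝ) (2*π),
      deriv (circleMap c s) θ • (circleMap c s θ - c)⁻¹ • f (circleMap c s θ)
      = Complex.I * f (circleMap c s θ) := by
    intro θ _
    rw [deriv_circleMap, circleMap_sub_center, smul_eq_mul, smul_eq_mul]
    field_simp [hne θ]
  rw [intervalIntegral.integral_congr heq, intervalIntegral.integral_const_mul] at h
  have h2 : Complex.I * ∫ θ in (0:ℝ)..(2*π), f (circleMap c s θ)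
      = Complex.I * ((2*π:ℝ) • f c) := by
    rw [h]
    simp only [smul_eq_mul, Complex.real_smul]
    push_cast
    ring
  exact mul_left_cancel₀ Complex.I_ne_zero h2

lemma disc_mean_eq {f : ℂ → ℂ} {c : ℂ} {r : ℝ} (hr : 0 < r)
    (hd : DifferentiableOn ℂ f (closedBall c r)) :
    ∫ z in closedBall c r, f z = (π * r^2 : ℝ) • f c := by
  have hcont : ContinuousOn f (closedBall c r) := hd.continuousOn
  -- step A : translation
  have himage : (fun z : ℂ => c + z) '' closedBall 0 r = closedBall c r := by
    ext z
    simp only [Set.mem_image, mem_closedBall, dist_zero_right, dist_eq_norm]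
    constructor
    · rintro ⟨w, hw, rfl⟩; simpa using hw
    · intro hz; exact ⟨z - c, by simpa [norm_sub_rev] using hz, by ring⟩
  have htrans : ∫ z in closedBall c r, f z = ∫ z in closedBall (0:ℂ) r, f (c + z) := by
    rw [← himage, (measurePreserving_add_left volume c).setIntegral_image_emb
      (MeasurableEquiv.addLeft c).measurableEmbedding]
  -- step B : polar coordinates
  set F : ℂ → ℂ := (closedBall (0:ℂ) r).indicator (fun z => f (c + z)) with hF
  have hpolar := Complex.integral_comp_polarCoord_symm F
  have hRHS : ∫ p, F p = ∫ z in closedBall (0:ℂ) r, f (c + z) := by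
    rw [hF, integral_indicator measurableSet_closedBall]
  have hsymmc : Continuous (fun p : ℝ × ℝ => Complex.polarCoord.symm p) := by
    simp only [Complex.polarCoord_symm_apply]
    fun_prop
  have hsmem : ∀ p : ℝ × ℝ, Complex.polarCoord.symm p ∈ closedBall (0:ℂ) r ↔ |p.1| ≤ r := by
    intro p
    simp [mem_closedBall, dist_zero_right, Complex.norm_polarCoord_symm]
  have hind : ∀ p : ℝ × ℝ, p.1 • F (Complex.polarCoord.symm p)
      = (Complex.polarCoord.symm ⁻¹' closedBall (0:ℂ) r).indicator
          (fun p : ℝ × ℝ => p.1 • f (c + Complex.polarCoord.symm p)) p := by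
    intro p
    rw [hF]
    by_cases h : Complex.polarCoord.symm p ∈ closedBall (0:ℂ) r
    · rw [Set.indicator_of_mem h, Set.indicator_of_mem
        (show p ∈ (fun p : ℝ × ℝ => Complex.polarCoord.symm p) ⁻¹' closedBall (0:ℂ) r from h)]
    · rw [Set.indicator_of_notMem h, Set.indicator_of_notMem
        (show p ∉ (fun p : ℝ × ℝ => Complex.polarCoord.symm p) ⁻¹' closedBall (0:ℂ) r from h),
        smul_zero]
  rw [show (fun p : ℝ × ℝ => p.1 • F (Complex.polarCoord.symm p))
      = fun p => (Complex.polarCoord.symm ⁻¹' closedBall (0:ℂ) r).indicator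
          (fun p : ℝ × ℝ => p.1 • f (c + Complex.polarCoord.symm p)) p from funext hind,
    setIntegral_indicator (hsymmc.measurable measurableSet_closedBall)] at hpolar
  have hsets : polarCoord.target ∩ (fun p : ℝ × ℝ => Complex.polarCoord.symm p) ⁻¹' closedBall (0:ℂ) r
      = Set.Ioc (0:ℝ) r ×ˢ Set.Ioo (-π) π := by
    ext ⟨s, θ⟩
    simp only [Set.mem_inter_iff, polarCoord_target, Set.mem_prod, Set.mem_Ioi,
      Set.mem_Ioo, Set.mem_preimage, hsmem, Set.mem_Ioc]
    constructor
    · rintro ⟨⟨h1, h2⟩, h3⟩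
      rw [abs_of_pos h1] at h3
      exact ⟨⟨h1, h3⟩, h2⟩
    · rintro ⟨⟨h1, h3⟩, h2⟩
      exact ⟨⟨h1, h2⟩, by rwa [abs_of_pos h1]⟩
  rw [hsets] at hpolar
  -- Fubini
  set G : ℝ × ℝ → ℂ := fun p => p.1 • f (c + Complex.polarCoord.symm p) with hG
  have hGcont : ContinuousOn G (Set.Icc 0 r ×ˢ Set.Icc (-π) π) := by
    apply ContinuousOn.smul continuous_fst.continuousOn
    apply hcont.comp ((continuous_const.add hsymmc).continuousOn)
    rintro ⟨s, θ⟩ ⟨hs, _⟩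
    simp only [mem_closedBall]
    have : Complex.polarCoord.symm (s, θ) ∈ closedBall (0:ℂ) r := by
      rw [hsmem]
      exact abs_le.2 ⟨by linarith [hs.1], hs.2⟩
    simpa [dist_eq_norm, mem_closedBall, dist_zero_right] using this
  have hGint : IntegrableOn G (Set.Ioc (0:ℝ) r ×ˢ Set.Ioo (-π) π) := by
    apply (hGcont.integrableOn_compact (isCompact_Icc.prod isCompact_Icc)).mono_set
    exact Set.prod_mono Set.Ioc_subset_Icc_self Set.Ioo_subset_Icc_self
  rw [show (volume : Measure (ℝ × ℝ)) = (volume : Measure ℝ).prod volume from rfl] at hpolar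
  rw [setIntegral_prod _ hGint] at hpolar
  -- inner integral
  have hinner : ∀ s ∈ Set.Ioc (0:ℝ) r,
      (∫ θ in Set.Ioo (-π) π, G (s, θ)) = (s * (2*π)) • f c := by
    intro s hs
    have hcm : ∀ θ : ℝ, c + Complex.polarCoord.symm (s, θ) = circleMap c s θ := by
      intro θ
      rw [Complex.polarCoord_symm_apply, circleMap, Complex.exp_mul_I]
      push_cast
      ring
    have hper : Function.Periodic (fun θ => f (circleMap c s θ)) (2*π) :=
      (periodic_circleMap c s).comp f
    have h1 : (∫ θ in Set.Ioo (-π) π, G (s, θ)) = s • ∫ θ in Set.Ioo (-π) π, f (circleMap c s θ) := by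
      simp_rw [hG, hcm]
      exact integral_smul s _
    rw [h1, ← integral_Ioc_eq_integral_Ioo,
      ← intervalIntegral.integral_of_le (by linarith [pi_pos] : -π ≤ π)]
    have h2 : (∫ θ in (-π)..π, f (circleMap c s θ)) = ∫ θ in (0:ℝ)..(2*π), f (circleMap c s θ) := by
      have := hper.intervalIntegral_add_eq (-π) 0
      simpa [show -π + 2*π = π by ring] using this
    rw [h2, circle_mean_eq hs.1 (hd.mono (closedBall_subset_closedBall hs.2)), smul_smul]
  rw [setIntegral_congr_fun measurableSet_Ioc hinner] at hpolar
  -- outer integral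
  have houter : (∫ s in Set.Ioc (0:ℝ) r, (s * (2*π)) • f c) = (π * r^2 : ℝ) • f c := by
    rw [integral_smul_const]
    congr 1
    rw [← intervalIntegral.integral_of_le hr.le, intervalIntegral.integral_mul_const,
      integral_id]
    ring
  rw [houter, hRHS] at hpolar
  rw [htrans, ← hpolar]

lemma polydisc_mean_eq : ∀ (n : ℕ) (f : (Fin n → ℂ) → ℂ) (p : Fin n → ℂ) (r : ℝ), 0 < r →
    DifferentiableOn ℂ f (Set.univ.pi fun i => closedBall (p i) r) →
    ∫ z in Set.univ.pi (fun i => closedBall (p i) r), f z = (((π * r^2)^n : ℝ)) • f p := by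
  intro n
  induction n with
  | zero =>
    intro f p r hr hd
    have huniv : (Set.univ.pi fun i : Fin 0 => closedBall (p i) r) = Set.univ := by
      ext z; simp
    rw [huniv, Measure.restrict_univ]
    have h1 : (volume : Measure (Fin 0 → ℂ)) Set.univ = 1 := by
      rw [show (volume : Measure (Fin 0 → ℂ)) = Measure.pi (fun _ => volume) from rfl,
        Measure.pi_univ]
      simp
    rw [MeasureTheory.integral_unique, measureReal_def, h1]
    simp only [ENNReal.toReal_one, one_smul, pow_zero]
    exact congrArg f (Subsingleton.elim _ _)
  | succ n IH =>
    intro f p r hr hd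
    set p' : Fin n → ℂ := fun j => p j.succ with hp'
    set P' : Set (Fin n → ℂ) := Set.univ.pi fun j => closedBall (p' j) r with hP'
    set D : Set ℂ := closedBall (p 0) r with hD
    set P : Set (Fin (n+1) → ℂ) := Set.univ.pi fun i => closedBall (p i) r with hP
    have hmp := MeasureTheory.volume_preserving_piFinSuccAbove (fun _ : Fin (n+1) => ℂ) 0
    set e := MeasurableEquiv.piFinSuccAbove (fun _ : Fin (n+1) => ℂ) 0 with he
    have hsymm : ∀ (w : ℂ) (y : Fin n → ℂ), e.symm (w, y) = Fin.insertNth 0 w y := by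
      intro w y; rfl
    have hins0 : ∀ (w : ℂ) (y : Fin n → ℂ), Fin.insertNth (α := fun _ => ℂ) 0 w y 0 = w := by
      intro w y; simp
    have hinsS : ∀ (w : ℂ) (y : Fin n → ℂ) (j : Fin n),
        Fin.insertNth (α := fun _ => ℂ) 0 w y j.succ = y j := by
      intro w y j
      have hsa : (0 : Fin (n+1)).succAbove j = j.succ := by
        simp [Fin.succAbove_zero]
      rw [← hsa, Fin.insertNth_apply_succAbove]
    have hmem : ∀ (w : ℂ) (y : Fin n → ℂ),
        Fin.insertNth 0 w y ∈ P ↔ (w ∈ D ∧ y ∈ P') := by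
      intro w y
      simp only [hP, hP', hD, Set.mem_univ_pi]
      rw [Fin.forall_fin_succ]
      simp only [hins0, hinsS, hp']
    have himg : (⇑e) '' P = D ×ˢ P' := by
      rw [MeasurableEquiv.image_eq_preimage_symm]
      ext q
      obtain ⟨w, y⟩ := q
      simp only [Set.mem_preimage, hsymm, Set.mem_prod]
      exact hmem w y
    -- transfer the integral to the product space
    have h1 : ∫ z in P, f z = ∫ q in D ×ˢ P', f (e.symm q) := by
      rw [← himg, hmp.setIntegral_image_emb e.measurableEmbedding]
      simp only [MeasurableEquiv.symm_apply_apply]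
    -- continuity of insertion
    have hcont_ins : Continuous (fun q : ℂ × (Fin n → ℂ) =>
        (Fin.insertNth 0 q.1 q.2 : Fin (n+1) → ℂ)) := by
      apply continuous_pi
      intro i
      refine Fin.cases ?_ ?_ i
      · simp only [hins0]
        exact continuous_fst
      · intro j
        simp only [hinsS]
        exact (continuous_apply j).comp continuous_snd
    have hsymm_eq : (fun q : ℂ × (Fin n → ℂ) => e.symm q)
        = fun q => Fin.insertNth 0 q.1 q.2 := by
      funext q; obtain ⟨w, y⟩ := q; exact hsymm w y
    have hmapsto : Set.MapsTo (fun q : ℂ × (Fin n → ℂ) => e.symm q) (D ×ˢ P') P := by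
      rintro ⟨w, y⟩ ⟨hw, hy⟩
      show e.symm (w, y) ∈ P
      rw [hsymm]
      exact (hmem w y).2 ⟨hw, hy⟩
    have hPc' : IsCompact (D ×ˢ P') :=
      (isCompact_closedBall _ _).prod (isCompact_univ_pi fun j => isCompact_closedBall _ _)
    have hint : IntegrableOn (fun q => f (e.symm q)) (D ×ˢ P') := by
      apply ContinuousOn.integrableOn_compact hPc'
      apply hd.continuousOn.comp _ hmapsto
      rw [hsymm_eq]
      exact hcont_ins.continuousOn
    have h2 : ∫ q in D ×ˢ P', f (e.symm q) = ∫ w in D, ∫ y in P', f (e.symm (w, y)) := by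
      rw [show ((volume : Measure (ℂ × (Fin n → ℂ)))) = (volume : Measure ℂ).prod volume from rfl]
      exact setIntegral_prod _ hint
    -- inner integral via IH
    have hinsY : ∀ w : ℂ, Differentiable ℂ (fun y : Fin n → ℂ =>
        (Fin.insertNth (α := fun _ => ℂ) 0 w y : Fin (n+1) → ℂ)) := by
      intro w
      rw [differentiable_pi]
      intro i
      refine Fin.cases ?_ ?_ i
      · simp only [hins0]
        exact differentiable_const w
      · intro j
        simp only [hinsS]
        exact (ContinuousLinearMap.proj (R := ℂ) (φ := fun _ : Fin n => ℂ) j).differentiable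
    have hIH : ∀ w ∈ D, (∫ y in P', f (e.symm (w, y)))
        = ((π * r^2)^n : ℝ) • f (Fin.insertNth 0 w p') := by
      intro w hw
      have hdslice : DifferentiableOn ℂ (fun y => f (Fin.insertNth 0 w y)) P' :=
        hd.comp (hinsY w).differentiableOn (fun y hy => (hmem w y).2 ⟨hw, hy⟩)
      simp_rw [hsymm]
      exact IH _ p' r hr hdslice
    rw [h1, h2, setIntegral_congr_fun measurableSet_closedBall hIH, integral_smul]
    -- outer integral
    have hinsW : Differentiable ℂ (fun w : ℂ =>
        (Fin.insertNth (α := fun _ => ℂ) 0 w p' : Fin (n+1) → ℂ)) := by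
      rw [differentiable_pi]
      intro i
      refine Fin.cases ?_ ?_ i
      · simp only [hins0]
        exact differentiable_fun_id
      · intro j
        simp only [hinsS]
        exact differentiable_const (p' j)
    have hp'mem : p' ∈ P' := fun j _ => mem_closedBall_self hr.le
    have houter : ∫ w in D, f (Fin.insertNth 0 w p') = (π * r^2 : ℝ) • f (Fin.insertNth 0 (p 0) p') :=
      disc_mean_eq hr (hd.comp hinsW.differentiableOn (fun w hw => (hmem w p').2 ⟨hw, hp'mem⟩))
    have hpp : Fin.insertNth (α := fun _ => ℂ) 0 (p 0) p' = p := by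
      funext i
      refine Fin.cases ?_ ?_ i
      · exact hins0 _ _
      · intro j
        rw [hinsS]
    rw [houter, hpp, smul_smul]
    congr 1
    try ring

lemma pt_bound (n : ℕ) (f : (Fin n → ℂ) → ℂ) (p : Fin n → ℂ) {r : ℝ} (hr : 0 < r)
    (hd : DifferentiableOn ℂ f (Set.univ.pi fun i => closedBall (p i) r)) :
    (‖f p‖₊ : ℝ≥0∞)^2 * ENNReal.ofReal ((π * r^2)^n) ≤
      ∫⁻ z in Set.univ.pi (fun i => closedBall (p i) r), (‖f z‖₊ : ℝ≥0∞)^2 := by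
  set P : Set (Fin n → ℂ) := Set.univ.pi fun i => closedBall (p i) r with hP
  have hPm : MeasurableSet P := MeasurableSet.univ_pi fun i => measurableSet_closedBall
  have hpirpos : (0:ℝ) < (π * r^2)^n := by positivity
  set X : ℝ≥0∞ := ENNReal.ofReal ((π * r^2)^n) with hX
  have hX0 : X ≠ 0 := by
    simp only [hX, ne_eq, ENNReal.ofReal_eq_zero, not_le]
    exact hpirpos
  have hXt : X ≠ ⊤ := ENNReal.ofReal_ne_top
  -- volume of the polydisc
  have hvol : volume P = X := by
    rw [hP, show (volume : Measure (Fin n → ℂ)) = Measure.pi (fun _ => volume) from rfl,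
      Measure.pi_pi]
    simp only [Complex.volume_closedBall]
    rw [Finset.prod_const, Finset.card_univ, Fintype.card_fin, hX]
    rw [ENNReal.ofReal_pow (by positivity), ENNReal.ofReal_mul pi_pos.le,
      ENNReal.ofReal_pow hr.le]
    congr 1
    rw [mul_comm]
    congr 1
    rw [← ENNReal.ofReal_coe_nnreal, NNReal.coe_real_pi]
  -- step 1 : mean value
  have hmean := polydisc_mean_eq n f p r hr hd
  have h1 : (‖f p‖₊ : ℝ≥0∞) * X = (‖∫ z in P, f z‖₊ : ℝ≥0∞) := by
    rw [hmean, nnnorm_smul]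
    push_cast
    rw [mul_comm]
    congr 1
    rw [hX, ← Real.enorm_eq_ofReal hpirpos.le, enorm_eq_nnnorm]
  -- step 2 : norm of integral ≤ integral of norm
  have h2 : (‖∫ z in P, f z‖₊ : ℝ≥0∞) ≤ ∫⁻ z in P, (‖f z‖₊ : ℝ≥0∞) :=
    enorm_integral_le_lintegral_enorm _
  -- step 3 : Cauchy-Schwarz
  have hmeas : AEMeasurable (fun z => (‖f z‖₊ : ℝ≥0∞)) (volume.restrict P) :=
    (hd.continuousOn.aemeasurable hPm).enorm
  have h3 : (∫⁻ z in P, (‖f z‖₊ : ℝ≥0∞)) ≤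
      (∫⁻ z in P, (‖f z‖₊ : ℝ≥0∞)^(2:ℝ))^(1/2:ℝ) * (volume P)^(1/2:ℝ) := by
    have hconj : (2:ℝ).HolderConjugate 2 := Real.HolderConjugate.two_two
    have := ENNReal.lintegral_mul_le_Lp_mul_Lq (volume.restrict P)
      hconj hmeas (aemeasurable_const (b := (1:ℝ≥0∞)))
    simpa using this
  -- combine
  have h4 : ((‖f p‖₊ : ℝ≥0∞) * X)^2 ≤ (∫⁻ z in P, (‖f z‖₊ : ℝ≥0∞)^2) * X := by
    calc ((‖f p‖₊ : ℝ≥0∞) * X)^2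
        ≤ ((∫⁻ z in P, (‖f z‖₊ : ℝ≥0∞)^(2:ℝ))^(1/2:ℝ) * (volume P)^(1/2:ℝ))^2 := by
          apply pow_le_pow_left' (h1 ▸ (h2.trans h3))
      _ = (∫⁻ z in P, (‖f z‖₊ : ℝ≥0∞)^2) * X := by
          have hrpow2 : ∀ a : ℝ≥0∞, (a ^ (1/2:ℝ))^(2:ℕ) = a := by
            intro a
            rw [← ENNReal.rpow_natCast (a ^ (1/2:ℝ)) 2, ← ENNReal.rpow_mul]
            norm_num
          rw [mul_pow, hrpow2, hrpow2, hvol]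
          congr 1
          refine lintegral_congr fun z => ?_
          rw [show (2:ℝ) = ((2:ℕ):ℝ) by norm_num, ENNReal.rpow_natCast]
  have h5 : ((‖f p‖₊ : ℝ≥0∞)^2 * X) * X ≤ (∫⁻ z in P, (‖f z‖₊ : ℝ≥0∞)^2) * X := by
    calc ((‖f p‖₊ : ℝ≥0∞)^2 * X) * X = ((‖f p‖₊ : ℝ≥0∞) * X)^2 := by ring
      _ ≤ _ := h4
  exact (ENNReal.mul_le_mul_iff_left hX0 hXt).1 h5

lemma val_bound {n : ℕ} (hn : 1 ≤ n) {f : EuclideanSpace ℂ (Fin n) → ℂ}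
    {Ω : Set (EuclideanSpace ℂ (Fin n))} (hd : ∀ z ∈ Ω, DifferentiableAt ℂ f z)
    (w : EuclideanSpace ℂ (Fin n)) {δ : ℝ} (hδ : 0 < δ)
    (hball : Metric.closedBall w δ ⊆ Ω) :
    (‖f w‖₊ : ℝ≥0∞)^2 * ENNReal.ofReal ((π * (δ/n)^2)^n) ≤
      ∫⁻ z in Ω, (‖f z‖₊:ℝ≥0∞)^2 := by
  have hn' : (0:ℝ) < n := by exact_mod_cast Nat.pos_of_ne_zero (by omega)
  set r : ℝ := δ / n with hrdef
  have hr : 0 < r := div_pos hδ hn'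
  set P : Set (EuclideanSpace ℂ (Fin n)) := WithLp.ofLp ⁻¹' (Set.univ.pi fun i => Metric.closedBall (w i) r)
    with hPdef
  have hPball : P ⊆ Metric.closedBall w δ := by
    intro z hz
    rw [Metric.mem_closedBall, EuclideanSpace.dist_eq]
    have hbound : ∀ i, dist (z i) (w i) ^ 2 ≤ r^2 := by
      intro i
      have h1 := hz i (Set.mem_univ i)
      rw [Metric.mem_closedBall] at h1
      exact pow_le_pow_left₀ dist_nonneg h1 2
    calc √(∑ i, dist (z i) (w i)^2) ≤ √(∑ _i : Fin n, r^2) :=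
          Real.sqrt_le_sqrt (Finset.sum_le_sum fun i _ => hbound i)
      _ = √((n:ℝ) * r^2) := by
          rw [Finset.sum_const, Finset.card_univ, Fintype.card_fin, nsmul_eq_mul]
      _ ≤ √((n:ℝ)^2 * r^2) := by
          apply Real.sqrt_le_sqrt
          have h1n : (1:ℝ) ≤ (n:ℝ) := by exact_mod_cast hn
          nlinarith [sq_nonneg r, hr.le, mul_le_mul_of_nonneg_right (by nlinarith : (n:ℝ) ≤ (n:ℝ)^2) (sq_nonneg r)]
      _ = (n:ℝ) * r := by
          rw [show (n:ℝ)^2 * r^2 = ((n:ℝ)*r)^2 by ring, Real.sqrt_sq (by positivity)]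
      _ = δ := by rw [hrdef]; field_simp
  have hdP : DifferentiableOn ℂ
      (fun z : Fin n → ℂ => f ((EuclideanSpace.equiv (Fin n) ℂ).symm z))
      (Set.univ.pi fun i => closedBall (w i) r) := by
    intro z hz
    have hz' : (EuclideanSpace.equiv (Fin n) ℂ).symm z ∈ Ω := hball (hPball hz)
    exact ((hd _ hz').comp z
      ((EuclideanSpace.equiv (Fin n) ℂ).symm.differentiableAt)).differentiableWithinAt
  have hkey := pt_bound n (fun z : Fin n → ℂ => f ((EuclideanSpace.equiv (Fin n) ℂ).symm z))
    (fun i => w i) hr hdP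
  refine le_trans (le_of_eq ?_) (le_trans hkey ?_)
  · rfl
  · rw [show (volume : Measure (EuclideanSpace ℂ (Fin n))) =
        Measure.map (MeasurableEquiv.toLp 2 (Fin n → ℂ)) volume from rfl,
      (MeasurableEquiv.toLp 2 (Fin n → ℂ)).measurableEmbedding.restrict_map,
      lintegral_map_equiv]
    exact lintegral_mono' (Measure.restrict_mono
      (fun (z : Fin n → ℂ) hz => hball (hPball (show WithLp.toLp 2 z ∈ P from hz))) le_rfl) le_rfl

lemma deriv_bound {n : ℕ} (hn : 1 ≤ n) {f : EuclideanSpace ℂ (Fin n) → ℂ}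
    {Ω : Set (EuclideanSpace ℂ (Fin n))} (hd : ∀ z ∈ Ω, DifferentiableAt ℂ f z)
    (w : EuclideanSpace ℂ (Fin n)) {δ : ℝ} (hδ : 0 < δ)
    (hball : Metric.closedBall w δ ⊆ Ω)
    (hT : (∫⁻ z in Ω, (‖f z‖₊:ℝ≥0∞)^2) ≠ ⊤) :
    (‖fderiv ℂ f w‖₊ : ℝ≥0∞)^2 ≤ (ENNReal.ofReal ((δ/2)^2))⁻¹ *
      ((ENNReal.ofReal ((π * ((δ/2)/n)^2)^n))⁻¹ * ∫⁻ z in Ω, (‖f z‖₊:ℝ≥0∞)^2) := by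
  set T : ℝ≥0∞ := ∫⁻ z in Ω, (‖f z‖₊:ℝ≥0∞)^2 with hTdef
  set ρ : ℝ := δ/2 with hρdef
  have hρ : 0 < ρ := by positivity
  have hn' : (0:ℝ) < n := by exact_mod_cast Nat.pos_of_ne_zero (by omega)
  set X : ℝ≥0∞ := ENNReal.ofReal ((π * (ρ/n)^2)^n) with hXdef
  have hX0 : X ≠ 0 := by
    simp only [hXdef, ne_eq, ENNReal.ofReal_eq_zero, not_le]
    positivity
  have hXt : X ≠ ⊤ := ENNReal.ofReal_ne_top
  have hκt : X⁻¹ * T ≠ ⊤ := ENNReal.mul_ne_top (ENNReal.inv_ne_top.2 hX0) hT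
  set Cb : ℝ := Real.sqrt ((X⁻¹ * T).toReal) with hCbdef
  have hCb0 : 0 ≤ Cb := Real.sqrt_nonneg _
  -- value bound on closedBall w ρ
  have hval : ∀ w' ∈ Metric.closedBall w ρ, ‖f w'‖ ≤ Cb := by
    intro w' hw'
    have hsub : Metric.closedBall w' ρ ⊆ Ω := by
      refine le_trans ?_ hball
      apply Metric.closedBall_subset_closedBall'
      rw [Metric.mem_closedBall] at hw'
      linarith
    have h1 := val_bound hn hd w' hρ hsub
    have h2 : (‖f w'‖₊ : ℝ≥0∞)^2 ≤ X⁻¹ * T := by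
      have h2' := (ENNReal.le_div_iff_mul_le (Or.inl hX0) (Or.inl hXt)).2 h1
      rwa [ENNReal.div_eq_inv_mul] at h2'
    have h3 : ‖f w'‖^2 ≤ (X⁻¹ * T).toReal := by
      have h4 := ENNReal.toReal_mono hκt h2
      rwa [ENNReal.toReal_pow, ENNReal.coe_toReal, coe_nnnorm] at h4
    calc ‖f w'‖ = Real.sqrt (‖f w'‖^2) := by rw [Real.sqrt_sq (norm_nonneg _)]
      _ ≤ Cb := Real.sqrt_le_sqrt h3
  -- directional Cauchy estimate
  have hdir : ∀ v : EuclideanSpace ℂ (Fin n), ‖v‖ = 1 → ‖fderiv ℂ f w v‖ ≤ Cb / ρ := by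
    intro v hv
    set g : ℂ → ℂ := fun ζ => f (w + ζ • v) with hgdef
    have haff : ∀ ζ : ℂ, ‖ζ‖ ≤ ρ → w + ζ • v ∈ Metric.closedBall w ρ := by
      intro ζ hζ
      rw [Metric.mem_closedBall, dist_eq_norm]
      simpa [norm_smul, hv] using hζ
    have hgd : DifferentiableOn ℂ g (Metric.closedBall 0 ρ) := by
      intro ζ hζ
      rw [Metric.mem_closedBall, dist_zero_right] at hζ
      have hmem : w + ζ • v ∈ Ω := hball (Metric.closedBall_subset_closedBall
        (by linarith : ρ ≤ δ) (haff ζ hζ))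
      have h1 : DifferentiableAt ℂ (fun ζ : ℂ => w + ζ • v) ζ :=
        (differentiable_id.smul_const v).const_add w |>.differentiableAt
      exact ((hd _ hmem).comp ζ h1).differentiableWithinAt
    have hgcl : DiffContOnCl ℂ g (Metric.ball 0 ρ) :=
      (hgd.mono closure_ball_subset_closedBall).diffContOnCl
    have hsup : ∀ ζ ∈ Metric.sphere (0:ℂ) ρ, ‖g ζ‖ ≤ Cb := by
      intro ζ hζ
      rw [Metric.mem_sphere, dist_zero_right] at hζ
      exact hval _ (haff ζ hζ.le)
    have hder : HasDerivAt g (fderiv ℂ f w v) 0 := by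
      have h1 : HasFDerivAt f (fderiv ℂ f w) (w + (0:ℂ) • v) := by
        simpa using (hd w (hball (Metric.mem_closedBall_self hδ.le))).hasFDerivAt
      have h2 : HasDerivAt (fun ζ : ℂ => w + ζ • v) v 0 := by
        simpa using ((hasDerivAt_id (0:ℂ)).smul_const v).const_add w
      exact h1.comp_hasDerivAt 0 h2
    have := Complex.norm_deriv_le_of_forall_mem_sphere_norm_le hρ hgcl hsup
    rwa [hder.deriv] at this
  -- operator norm bound
  have hA : ‖fderiv ℂ f w‖ ≤ Cb / ρ := by
    apply ContinuousLinearMap.opNorm_le_bound _ (div_nonneg hCb0 hρ.le)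
    intro v
    rcases eq_or_ne v 0 with rfl | hv
    · simp
    · have hu : ‖(‖v‖⁻¹ • v : EuclideanSpace ℂ (Fin n))‖ = 1 := norm_smul_inv_norm hv
      have h1 := hdir _ hu
      have h2 : fderiv ℂ f w v = ‖v‖ • fderiv ℂ f w (‖v‖⁻¹ • v) := by
        rw [← (fderiv ℂ f w).map_smul_of_tower, smul_inv_smul₀ (norm_ne_zero_iff.2 hv)]
      rw [h2, norm_smul, norm_norm, mul_comm]
      exact mul_le_mul_of_nonneg_right h1 (norm_nonneg v)
  -- conclude in ℝ≥0∞
  have h5 : (‖fderiv ℂ f w‖₊ : ℝ≥0∞)^2 ≤ ENNReal.ofReal ((Cb/ρ)^2) := by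
    rw [show ((‖fderiv ℂ f w‖₊ : ℝ≥0∞))^2 = ENNReal.ofReal (‖fderiv ℂ f w‖^2) by
      rw [ENNReal.ofReal_pow (norm_nonneg _), ofReal_norm, enorm_eq_nnnorm]]
    exact ENNReal.ofReal_le_ofReal (pow_le_pow_left₀ (norm_nonneg _) hA 2)
  refine h5.trans ?_
  have h6 : (Cb/ρ)^2 = (ρ^2)⁻¹ * (X⁻¹*T).toReal := by
    rw [div_pow, hCbdef, Real.sq_sqrt ENNReal.toReal_nonneg]
    ring
  rw [h6, ENNReal.ofReal_mul (by positivity), ENNReal.ofReal_toReal hκt,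
    ENNReal.ofReal_inv_of_pos (by positivity)]

/-- The main analytic estimate in the proof of Theorem 1: if `φ` is `C¹` up to the boundary and
`∂̄φ = 0` on a neighborhood (in `closure Ω`) of `F = φ⁻¹(φ(∂Ω) ∩ ∂Ω) ∩ closure Ω`, then
`∫_Ω ‖∂̄(f∘φ)‖² dV ≤ C ∫_Ω |f|² dV` for all `f ∈ A²(Ω)`. -/
theorem projected_composition_stmt5
    (n : ℕ) (hn : 1 ≤ n)
    (Ω : Set (EuclideanSpace ℂ (Fin n)))
    (hΩo : IsOpen Ω) (hΩne : Ω.Nonempty) (hΩb : Bornology.IsBounded Ω)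
    (φ : EuclideanSpace ℂ (Fin n) → EuclideanSpace ℂ (Fin n))
    (hφC1 : ∃ W : Set (EuclideanSpace ℂ (Fin n)),
      IsOpen W ∧ closure Ω ⊆ W ∧ ContDiffOn ℝ 1 φ W)
    (hφ : Set.MapsTo φ Ω Ω) (hφcl : Set.MapsTo φ (closure Ω) (closure Ω))
    (K F : Set (EuclideanSpace ℂ (Fin n)))
    (hK : K = φ '' frontier Ω ∩ frontier Ω)
    (hF : F = φ ⁻¹' K ∩ closure Ω)
    (U : Set (EuclideanSpace ℂ (Fin n))) (hUo : IsOpen U) (hFU : F ⊆ U)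
    (hCR : ∀ z ∈ U ∩ closure Ω, ∀ (c : ℂ) (v : EuclideanSpace ℂ (Fin n)),
      fderiv ℝ φ z (c • v) = c • fderiv ℝ φ z v) :
    ∃ C : ℝ, 0 < C ∧ ∀ f : EuclideanSpace ℂ (Fin n) → ℂ, BergmanA2 Ω f →
      (∫⁻ z in Ω, (‖dbar (f ∘ φ) z‖₊ : ℝ≥0∞) ^ 2) ≤
        ENNReal.ofReal C * ∫⁻ z in Ω, (‖f z‖₊ : ℝ≥0∞) ^ 2 := by
  obtain ⟨W, hWo, hclW, hφW⟩ := hφC1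
  have hcΩ : IsCompact (closure Ω) :=
    Metric.isCompact_of_isClosed_isBounded isClosed_closure hΩb.closure
  have hφcont : ContinuousOn φ W := hφW.continuousOn
  set S : Set (EuclideanSpace ℂ (Fin n)) := closure Ω \ U with hS
  have hScomp : IsCompact S := hcΩ.diff hUo
  have hSsub : S ⊆ closure Ω := Set.diff_subset
  have hSΩ : ∀ z ∈ S, φ z ∈ Ω := by
    rintro z ⟨hzcl, hzU⟩
    have hzK : φ z ∉ K := by
      intro hK'
      exact hzU (hFU (by rw [hF]; exact ⟨hK', hzcl⟩))
    by_cases hzΩ : z ∈ Ω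
    · exact hφ hzΩ
    · have hzf : z ∈ frontier Ω := by
        rw [hΩo.frontier_eq]
        exact ⟨hzcl, hzΩ⟩
      have hnotfr : φ z ∉ frontier Ω := fun h => hzK (hK ▸ ⟨Set.mem_image_of_mem φ hzf, h⟩)
      by_contra hno
      exact hnotfr (by rw [hΩo.frontier_eq]; exact ⟨hφcl hzcl, hno⟩)
  have hφS : IsCompact (φ '' S) := hScomp.image_of_continuousOn (hφcont.mono (hSsub.trans hclW))
  have hφSsub : φ '' S ⊆ Ω := by rintro _ ⟨z, hz, rfl⟩; exact hSΩ z hz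
  obtain ⟨δ₀, hδ₀, hthick⟩ := hφS.exists_thickening_subset_open hΩo hφSsub
  set δ : ℝ := δ₀ / 2 with hδdef
  have hδ : 0 < δ := by positivity
  have hball : ∀ w ∈ φ '' S, Metric.closedBall w δ ⊆ Ω := by
    intro w hw
    refine subset_trans ?_ hthick
    intro x hx
    rw [Metric.mem_closedBall] at hx
    rw [Metric.mem_thickening_iff]
    exact ⟨w, hw, by rw [hδdef] at hx; linarith⟩
  have hfdcont : ContinuousOn (fderiv ℝ φ) W := hφW.continuousOn_fderiv_of_isOpen hWo le_rfl
  obtain ⟨M0, hM0⟩ := hcΩ.exists_bound_of_continuousOn (hfdcont.mono hclW)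
  set Mb : ℝ := max M0 0 with hMbdef
  have hMb0 : 0 ≤ Mb := le_max_right _ _
  have hMbB : ∀ z ∈ closure Ω, ‖fderiv ℝ φ z‖ ≤ Mb := fun z hz => (hM0 z hz).trans (le_max_left _ _)
  set κ : ℝ≥0∞ := (ENNReal.ofReal ((δ/2)^2))⁻¹ * (ENNReal.ofReal ((π * ((δ/2)/n)^2)^n))⁻¹ with hκ
  have hn' : (0:ℝ) < n := by exact_mod_cast Nat.pos_of_ne_zero (by omega)
  have hκt : κ ≠ ⊤ := by
    apply ENNReal.mul_ne_top
    · exact ENNReal.inv_ne_top.2 (by simp only [ne_eq, ENNReal.ofReal_eq_zero, not_le]; positivity)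
    · exact ENNReal.inv_ne_top.2 (by simp only [ne_eq, ENNReal.ofReal_eq_zero, not_le]; positivity)
  set c : ℝ≥0∞ := ENNReal.ofReal (Mb^2) * κ with hc
  have hct : c ≠ ⊤ := ENNReal.mul_ne_top ENNReal.ofReal_ne_top hκt
  haveI : IsFiniteMeasureOnCompacts (volume : Measure (EuclideanSpace ℂ (Fin n))) :=
    ⟨fun K hK => by
      rw [show (volume : Measure (EuclideanSpace ℂ (Fin n))) =
          Measure.map (MeasurableEquiv.toLp 2 (Fin n → ℂ)) volume from rfl,
        MeasurableEquiv.map_apply, ← MeasurableEquiv.image_symm]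
      exact (hK.image (PiLp.continuous_ofLp (p := 2) (β := fun _ : Fin n => ℂ))).measure_lt_top⟩
  have hvolΩ : volume Ω ≠ ⊤ := ((measure_mono subset_closure).trans_lt hcΩ.measure_lt_top).ne
  refine ⟨(c * volume Ω).toReal + 1, by positivity, ?_⟩
  intro f hf
  set T := ∫⁻ z in Ω, (‖f z‖₊:ℝ≥0∞)^2 with hT
  have hTt : T ≠ ⊤ := hf.2.ne
  have hpt : ∀ z ∈ Ω, (‖dbar (f ∘ φ) z‖₊ : ℝ≥0∞)^2 ≤ c * T := by
    intro z hz
    have hzW : z ∈ W := hclW (subset_closure hz)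
    have hφd : DifferentiableAt ℝ φ z :=
      (hφW.differentiableOn one_ne_zero).differentiableAt (hWo.mem_nhds hzW)
    have hfd : DifferentiableAt ℂ f (φ z) := hf.1 _ (hφ hz)
    set A := fderiv ℂ f (φ z) with hA
    set B := fderiv ℝ φ z with hB
    have hcomp : fderiv ℝ (f ∘ φ) z = (A.restrictScalars ℝ).comp B :=
      ((hfd.hasFDerivAt.restrictScalars ℝ).comp z hφd.hasFDerivAt).fderiv
    set Q : EuclideanSpace ℂ (Fin n) →L[ℝ] EuclideanSpace ℂ (Fin n) :=
      (2⁻¹ : ℂ) • (B + Complex.I • (B.comp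
        (Complex.I • ContinuousLinearMap.id ℝ (EuclideanSpace ℂ (Fin n))))) with hQ
    have hdbar : dbar (f ∘ φ) z = (A.restrictScalars ℝ).comp Q := by
      rw [dbar, hcomp, hQ]
      ext v
      simp only [ContinuousLinearMap.coe_smul', Pi.smul_apply, ContinuousLinearMap.add_apply,
        ContinuousLinearMap.coe_comp', Function.comp_apply,
        ContinuousLinearMap.coe_restrictScalars', ContinuousLinearMap.smul_apply,
        ContinuousLinearMap.coe_id', id_eq]
      rw [_root_.map_smul A, map_add A, _root_.map_smul A]
    by_cases hzU : z ∈ U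
    · have hQ0 : Q = 0 := by
        rw [hQ]
        ext v
        simp only [ContinuousLinearMap.coe_smul', Pi.smul_apply, ContinuousLinearMap.add_apply,
          ContinuousLinearMap.coe_comp', Function.comp_apply, ContinuousLinearMap.smul_apply,
          ContinuousLinearMap.coe_id', id_eq, ContinuousLinearMap.zero_apply]
        rw [hCR z ⟨hzU, subset_closure hz⟩ Complex.I v, smul_smul, Complex.I_mul_I,
          neg_one_smul, add_neg_cancel, smul_zero]
      rw [hdbar, hQ0, ContinuousLinearMap.comp_zero]
      simp only [nnnorm_zero, ENNReal.coe_zero, ne_eq, OfNat.ofNat_ne_zero,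
        not_false_eq_true, zero_pow]
      exact zero_le
    · have hzS : z ∈ S := ⟨subset_closure hz, hzU⟩
      have hAb := deriv_bound hn hf.1 (φ z) hδ (hball _ (Set.mem_image_of_mem φ hzS)) hTt
      have hIsmul : ∀ (L : EuclideanSpace ℂ (Fin n) →L[ℝ] EuclideanSpace ℂ (Fin n)),
          ‖Complex.I • L‖ ≤ ‖L‖ := by
        intro L
        have h0 := ContinuousLinearMap.opNorm_smul_le (Complex.I) L
        rwa [Complex.norm_I, one_mul] at h0
      have h1 : ‖Complex.I • (B.comp (Complex.I •
          ContinuousLinearMap.id ℝ (EuclideanSpace ℂ (Fin n))))‖ ≤ ‖B‖ := by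
        refine (hIsmul _).trans ((ContinuousLinearMap.opNorm_comp_le _ _).trans ?_)
        have h2 : ‖Complex.I • ContinuousLinearMap.id ℝ (EuclideanSpace ℂ (Fin n))‖ ≤ 1 :=
          (hIsmul _).trans ContinuousLinearMap.norm_id_le
        calc ‖B‖ * ‖Complex.I • ContinuousLinearMap.id ℝ (EuclideanSpace ℂ (Fin n))‖
            ≤ ‖B‖ * 1 := mul_le_mul_of_nonneg_left h2 (norm_nonneg B)
          _ = ‖B‖ := mul_one _
      have hhalf : ‖(2⁻¹:ℂ)‖ = 2⁻¹ := by
        rw [norm_inv]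
        norm_num
      have hQn : ‖Q‖ ≤ Mb := by
        rw [hQ]
        refine (ContinuousLinearMap.opNorm_smul_le _ _).trans ?_
        rw [hhalf]
        calc 2⁻¹ * ‖B + Complex.I • (B.comp (Complex.I •
              ContinuousLinearMap.id ℝ (EuclideanSpace ℂ (Fin n))))‖
            ≤ 2⁻¹ * (‖B‖ + ‖B‖) := by
              apply mul_le_mul_of_nonneg_left _ (by norm_num)
              exact (norm_add_le _ _).trans (by linarith)
          _ = ‖B‖ := by ring
          _ ≤ Mb := hMbB z (subset_closure hz)
      have hnorm : ‖dbar (f ∘ φ) z‖ ≤ ‖A‖ * Mb := by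
        rw [hdbar]
        calc ‖(A.restrictScalars ℝ).comp Q‖ ≤ ‖A.restrictScalars ℝ‖ * ‖Q‖ :=
              ContinuousLinearMap.opNorm_comp_le _ _
          _ ≤ ‖A‖ * Mb := by
              rw [ContinuousLinearMap.norm_restrictScalars]
              exact mul_le_mul le_rfl hQn (norm_nonneg _) (norm_nonneg _)
      have h2 : (‖dbar (f ∘ φ) z‖₊ : ℝ≥0∞)^2 ≤ ENNReal.ofReal ((‖A‖*Mb)^2) := by
        rw [show ((‖dbar (f ∘ φ) z‖₊:ℝ≥0∞))^2 = ENNReal.ofReal (‖dbar (f ∘ φ) z‖^2) from by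
          rw [ENNReal.ofReal_pow (norm_nonneg _), ofReal_norm, enorm_eq_nnnorm]]
        exact ENNReal.ofReal_le_ofReal (pow_le_pow_left₀ (norm_nonneg _) hnorm 2)
      refine h2.trans ?_
      have h3 : ENNReal.ofReal ((‖A‖*Mb)^2) = ENNReal.ofReal (Mb^2) * ((‖A‖₊:ℝ≥0∞)^2) := by
        rw [mul_pow, ENNReal.ofReal_mul (by positivity), mul_comm]
        congr 1
        rw [ENNReal.ofReal_pow (norm_nonneg _), ofReal_norm, enorm_eq_nnnorm]
      rw [h3, hc, mul_assoc]
      apply mul_le_mul_right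
      refine hAb.trans (le_of_eq ?_)
      rw [hκ, mul_assoc]
  calc (∫⁻ z in Ω, (‖dbar (f ∘ φ) z‖₊ : ℝ≥0∞) ^ 2)
      ≤ ∫⁻ _z in Ω, c * T := setLIntegral_mono' hΩo.measurableSet hpt
    _ = c * T * volume Ω := setLIntegral_const Ω (c*T)
    _ = (c * volume Ω) * T := by ring
    _ ≤ ENNReal.ofReal ((c * volume Ω).toReal + 1) * T := by
        apply mul_le_mul_left
        calc c * volume Ω = ENNReal.ofReal ((c*volume Ω).toReal) :=
              (ENNReal.ofReal_toReal (ENNReal.mul_ne_top hct hvolΩ)).symm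
          _ ≤ _ := by
              apply ENNReal.ofReal_le_ofReal
              have h9 : (0:ℝ) ≤ (c * volume Ω).toReal := ENNReal.toReal_nonneg
              linarith
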